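/- Let α₁ be a nonzero complex number with α₁ ≠ 1, fix a square root √α₁, define f(x,y) = (1/α₁ + α₁ x + y, x/(1/α₁ + y)) and V₂(x,y) = (−1 + α₁(1−√α₁)x + (√α₁−2α₁)y + α₁(√α₁−α₁)y²)/(1 + α₁ y). Then V₂(f(x,y)) = √α₁ · V₂(x,y) wherever defined. -/

import Mathlib

theorem stmt_8 (α s x y : ℂ) (hα : α ≠ 0) (hα1 : α ≠ 1) (hs : s ^ 2 = α)
    (h1 : 1 / α + y ≠ 0) (h2 : 1 + α * y ≠ 0)
    (h3 : 1 + α * (x / (1 / α + y)) ≠ 0) :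
    let V₂ : ℂ → ℂ → ℂ := fun u v =>
      (-1 + α * (1 - s) * u + (s - 2 * α) * v + α * (s - α) * v ^ 2)
        / (1 + α * v)
    V₂ (1 / α + α * x + y) (x / (1 / α + y)) = s * V₂ x y := by
  intro V₂
  simp only [V₂]
  have e : x / (1 / α + y) = α * x / (1 + α * y) := by
    rw [div_add' _ _ _ hα, div_div_eq_mul_div]
    ring_nf
  have hD : 1 + α * y + α ^ 2 * x ≠ 0 := by
    intro h
    apply h3
    rw [e]
    field_simp
    linear_combination h
  have hden : 1 + α * (α * x / (1 + α * y)) = (1 + α * y + α ^ 2 * x) / (1 + α * y) := by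
    field_simp
  rw [e, hden, div_div_eq_mul_div, mul_comm s, div_mul_eq_mul_div, div_eq_div_iff hD h2]
  field_simp
  subst hs
  ring
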